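/- Closed form for the exponential generating function of the C_a ≀ S_n Eulerian polynomials: Σ_{n≥0} (u^n/n!)·A_{a,ℓ,n}(t) = (1−t)/(−t e^{ℓ(1−t)u} + e^{(a−ℓ)u(t−1)}). -/

import Mathlib

open Finset Polynomial
open scoped Classical

/-- An element of the wreath product `C_a ≀ S_n`, viewed as a colored permutation:
the window is `[σ(1),…,σ(n)]` where `|σ(i)| = π(i)` (1-based) and the color of the
letter in position `i` is `c(i)`, i.e. `σ(i) = α^{c(i)} |σ(i)|`. -/
abbrev ColPerm (a n : ℕ) := Equiv.Perm (Fin n) × (Fin n → Fin a)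

/-- A rank function realizing (a canonical choice of) the linear order `<_L` of
Regev–Roichman on the letters `α^t j` (encoded as the pair `(t, j)` with `1 ≤ j`)
together with `0` (encoded as `(t, 0)`): letters with color in `L` are negative,
ordered with larger absolute value smaller; letters with color not in `L` are
positive, ordered with larger absolute value larger; `x <_L y ↔ rkL L x < rkL L y`. -/
def rkL {a : ℕ} (L : Finset (Fin a)) (x : Fin a × ℕ) : ℤ :=
  if x.2 = 0 then 0
  else if x.1 ∈ L then -((x.2 : ℤ) * a + (x.1 : ℤ)) else (x.2 : ℤ) * a + (x.1 : ℤ)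

/-- The letter `σ(i)` (as a color/absolute-value pair) in position `i` (1-based) of
the window of `σ`; positions outside `{1,…,n}` give the letter `0`. -/
def wval {a n : ℕ} [NeZero a] (σ : ColPerm a n) (i : ℕ) : Fin a × ℕ :=
  if h : 1 ≤ i ∧ i ≤ n then (σ.2 ⟨i - 1, by omega⟩, (σ.1 ⟨i - 1, by omega⟩ : ℕ) + 1)
  else (0, 0)

/-- The `L`-descent set `Des_L(σ) = {0 ≤ i ≤ n-1 : σ(i) >_L σ(i+1)}`, with `σ(0) := 0`. -/
def DesL {a n : ℕ} [NeZero a] (L : Finset (Fin a)) (σ : ColPerm a n) : Finset ℕ :=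
  (Finset.range n).filter (fun i => rkL L (wval σ (i + 1)) < rkL L (wval σ i))

/-- The `L`-descent number `des_L(σ) = |Des_L(σ)|`. -/
def desL {a n : ℕ} [NeZero a] (L : Finset (Fin a)) (σ : ColPerm a n) : ℕ := (DesL L σ).card

/-- The `L`-reverse major index `rmaj_{L,n}(σ) = Σ_{i ∈ Des_L(σ)} (n - i)`. -/
def rmajL {a n : ℕ} [NeZero a] (L : Finset (Fin a)) (σ : ColPerm a n) : ℕ :=
  ∑ i ∈ DesL L σ, (n - i)

/-- The `C_a ≀ S_n` Eulerian number `A_{a,L,n,s} = #{σ ∈ C_a≀S_n : des_L σ = s}`. -/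
noncomputable def Anum (a n s : ℕ) [NeZero a] (L : Finset (Fin a)) : ℕ :=
  (Finset.univ.filter (fun σ : ColPerm a n => desL L σ = s)).card

/-- The `C_a ≀ S_n` Eulerian polynomial `A_{a,L,n}(t) = Σ_{σ ∈ C_a≀S_n} t^{des_L σ}`. -/
noncomputable def Aeul (a n : ℕ) [NeZero a] (L : Finset (Fin a)) : Polynomial ℚ :=
  ∑ σ : ColPerm a n, X ^ desL L σ

set_option linter.unusedSectionVars false
namespace AeulProof
open PowerSeries in
example : True := trivial

variable {a : ℕ} [NeZero a] (L : Finset (Fin a)) {n : ℕ}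

/-- The letter at 0-based window position `i`. -/
def X0 (σ : ColPerm a n) (i : Fin n) : Fin a × ℕ := (σ.2 i, (σ.1 i : ℕ) + 1)

/-- rank of the letter at 0-based window position `i`. -/
def rr (σ : ColPerm a n) (i : Fin n) : ℤ := rkL L (X0 σ i)

lemma rk_letter (c : Fin a) (j : ℕ) (hj : j ≠ 0) :
    rkL L (c, j) = if c ∈ L then -((j : ℤ) * a + c) else (j : ℤ) * a + c := by
  simp [rkL, hj]

lemma rk_letter_abs_pos (c : Fin a) (j : ℕ) (hj : j ≠ 0) :
    0 < (j : ℤ) * a + c := by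
  have ha : 0 < (a : ℤ) := by exact_mod_cast Nat.pos_of_ne_zero (NeZero.ne a)
  have : (1 : ℤ) ≤ (j : ℤ) := by exact_mod_cast Nat.one_le_iff_ne_zero.2 hj
  have hc0 : (0:ℤ) ≤ (c:ℤ) := by positivity
  nlinarith

lemma rk_neg_iff (c : Fin a) (j : ℕ) (hj : j ≠ 0) :
    rkL L (c, j) < 0 ↔ c ∈ L := by
  rw [rk_letter L c j hj]
  have := rk_letter_abs_pos c j hj
  split <;> simp_all <;> omega

lemma rk_ne_zero (c : Fin a) (j : ℕ) (hj : j ≠ 0) : rkL L (c, j) ≠ 0 := by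
  rw [rk_letter L c j hj]
  have := rk_letter_abs_pos c j hj
  split <;> omega

lemma rk_inj {c c' : Fin a} {j j' : ℕ} (hj : j ≠ 0) (hj' : j' ≠ 0)
    (h : rkL L (c, j) = rkL L (c', j')) : c = c' ∧ j = j' := by
  have ha : 0 < (a : ℤ) := by exact_mod_cast Nat.pos_of_ne_zero (NeZero.ne a)
  have hc : (c : ℤ) < a := by exact_mod_cast c.isLt
  have hc' : (c' : ℤ) < a := by exact_mod_cast c'.isLt
  have hc0 : (0:ℤ) ≤ (c:ℤ) := by positivity
  have hc0' : (0:ℤ) ≤ (c':ℤ) := by positivity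
  have h1 := rk_letter_abs_pos c j hj
  have h2 := rk_letter_abs_pos c' j' hj'
  rw [rk_letter L c j hj, rk_letter L c' j' hj'] at h
  have key : (j : ℤ) * a + c = (j' : ℤ) * a + c' := by
    by_cases h3 : c ∈ L <;> by_cases h4 : c' ∈ L <;> simp [h3, h4] at h <;> omega
  -- extract c = c' via mod
  have hm : ((j : ℤ) * a + c) % a = ((j' : ℤ) * a + c') % a := by rw [key]
  rw [add_comm ((j:ℤ)*a) _, add_comm ((j':ℤ)*a) _, Int.add_mul_emod_self_right, Int.add_mul_emod_self_right] at hm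
  rw [Int.emod_eq_of_lt hc0 hc, Int.emod_eq_of_lt hc0' hc'] at hm
  have hcc : c = c' := by
    have : (c : ℕ) = (c' : ℕ) := by exact_mod_cast hm
    exact Fin.ext this
  refine ⟨hcc, ?_⟩
  have : (j : ℤ) = j' := by
    have := key
    rw [hm] at this
    have hja : (j : ℤ) * a = (j' : ℤ) * a := by omega
    exact mul_right_cancel₀ ha.ne' hja
  exact_mod_cast this

lemma rr_inj {σ : ColPerm a n} {i i' : Fin n} (h : rr L σ i = rr L σ i') : i = i' := by
  unfold rr X0 at h
  obtain ⟨-, h2⟩ := rk_inj L (by omega) (by omega) h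
  have : σ.1 i = σ.1 i' := Fin.ext (by omega)
  exact σ.1.injective this

lemma wval_succ (σ : ColPerm a n) (i : Fin n) :
    wval σ ((i : ℕ) + 1) = X0 σ i := by
  have hi := i.isLt
  rw [wval, dif_pos ⟨by omega, by omega⟩]
  simp [X0]

lemma mem_DesL_zero {σ : ColPerm a n} (h0 : 0 < n) :
    0 ∈ DesL L σ ↔ σ.2 ⟨0, h0⟩ ∈ L := by
  rw [DesL, Finset.mem_filter, Finset.mem_range]
  have h1 : wval σ 0 = (0, 0) := by rw [wval]; simp
  have h2 : wval σ (0 + 1) = X0 σ ⟨0, h0⟩ := wval_succ σ ⟨0, h0⟩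
  rw [h1, h2]
  have : rkL L ((0:Fin a), 0) = 0 := by simp [rkL]
  rw [this]
  constructor
  · rintro ⟨-, h⟩
    exact (rk_neg_iff L _ _ (by omega)).1 h
  · intro h
    exact ⟨h0, (rk_neg_iff L _ _ (by omega)).2 h⟩

lemma mem_DesL_succ {σ : ColPerm a n} (i : ℕ) (h : i + 1 < n) :
    (i + 1) ∈ DesL L σ ↔ rr L σ ⟨i+1, h⟩ < rr L σ ⟨i, by omega⟩ := by
  rw [DesL, Finset.mem_filter, Finset.mem_range]
  have h2 : wval σ ((i+1) + 1) = X0 σ ⟨i+1, h⟩ := wval_succ σ ⟨i+1, h⟩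
  have h3 : wval σ (i + 1) = X0 σ ⟨i, by omega⟩ := wval_succ σ ⟨i, by omega⟩
  rw [h2, h3]
  unfold rr
  tauto

lemma DesL_subset_range {σ : ColPerm a n} : DesL L σ ⊆ Finset.range n :=
  Finset.filter_subset _ _

end AeulProof
namespace AeulProof
variable {a : ℕ} [NeZero a] (L : Finset (Fin a)) {n : ℕ}

/-- The alphabet: pairs (color, level) with levels in `{0,…,s}`, where letters whose
color is in `L` must have positive level. -/
def Alph (s : ℕ) : Type := {x : Fin a × Fin (s+1) // x.1 ∈ L → x.2 ≠ 0}

noncomputable instance (s : ℕ) : Fintype (Alph L s) := by unfold Alph; infer_instance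

lemma card_Alph (s : ℕ) : Fintype.card (Alph L s) = a * (s+1) - L.card := by
  have e : Fintype.card (Alph L s)
      = Fintype.card {x : Fin a × Fin (s+1) // x.1 ∈ L → x.2 ≠ 0} := by
    unfold Alph; exact Fintype.card_congr (Equiv.refl _)
  rw [e, Fintype.card_subtype]
  have h1 : (Finset.univ.filter (fun x : Fin a × Fin (s+1) => ¬ (x.1 ∈ L ∧ x.2 = 0))).card
      = a * (s+1) - L.card := by
    rw [Finset.filter_not, Finset.card_sdiff_of_subset (Finset.filter_subset _ _)]
    congr 1
    · simp [Fintype.card_prod]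
    · have : (Finset.univ.filter (fun x : Fin a × Fin (s+1) => x.1 ∈ L ∧ x.2 = 0))
          = L ×ˢ {0} := by
        ext x
        simp only [Finset.mem_filter, Finset.mem_univ, true_and, Finset.mem_product,
          Finset.mem_singleton]
      rw [this, Finset.card_product]
      simp
  rw [← h1]
  congr 1
  ext x
  simp only [Finset.mem_filter, Finset.mem_univ, true_and]
  tauto

end AeulProof
namespace AeulProof
variable {a : ℕ} [NeZero a] (L : Finset (Fin a)) {n : ℕ}

/-- Sorting key of the letter placed at value `v`. -/
def key {s : ℕ} (f : Fin n → Alph L s) (v : Fin n) : ℕ ×ₗ ℤ :=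
  toLex (((f v).1.2 : ℕ), rkL L ((f v).1.1, (v : ℕ) + 1))

lemma key_inj {s : ℕ} (f : Fin n → Alph L s) : Function.Injective (key L f) := by
  intro v v' h
  unfold key at h
  have h2 : rkL L ((f v).1.1, (v : ℕ) + 1) = rkL L ((f v').1.1, (v' : ℕ) + 1) :=
    congrArg (fun x => (ofLex x).2) h
  obtain ⟨-, h3⟩ := rk_inj L (by omega) (by omega) h2
  exact Fin.ext (by omega)

/-- The underlying permutation obtained by sorting by keys. -/
noncomputable def perm0 {s : ℕ} (f : Fin n → Alph L s) : Equiv.Perm (Fin n) :=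
  Tuple.sort (key L f)

/-- The colored permutation associated with a word `f`. -/
noncomputable def Phi {s : ℕ} (f : Fin n → Alph L s) : ColPerm a n :=
  (perm0 L f, fun i => (f (perm0 L f i)).1.1)

/-- The level word of `f`, read along the window of `Phi f`. -/
noncomputable def gg {s : ℕ} (f : Fin n → Alph L s) : Fin n → Fin (s+1) :=
  fun i => (f (perm0 L f i)).1.2

lemma key_perm0 {s : ℕ} (f : Fin n → Alph L s) (i : Fin n) :
    key L f (perm0 L f i) = toLex ((gg L f i : ℕ), rr L (Phi L f) i) := rfl

lemma key_strictMono_along {s : ℕ} (f : Fin n → Alph L s) :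
    StrictMono (key L f ∘ (perm0 L f)) :=
  (Tuple.monotone_sort (key L f)).strictMono_of_injective
    ((key_inj L f).comp (perm0 L f).injective)

/-- The compatibility conditions on a level word relative to `σ`. -/
def OKg (σ : ColPerm a n) {s : ℕ} (g : Fin n → Fin (s+1)) : Prop :=
  (∀ (i : ℕ) (h : i + 1 < n),
     (g ⟨i, by omega⟩ : ℕ) + (if (i+1) ∈ DesL L σ then 1 else 0) ≤ (g ⟨i+1, h⟩ : ℕ)) ∧
  (∀ h0 : 0 ∈ DesL L σ, 1 ≤ (g ⟨0, Finset.mem_range.1 (DesL_subset_range L h0)⟩ : ℕ))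

noncomputable def Gset (σ : ColPerm a n) (s : ℕ) : Finset (Fin n → Fin (s+1)) :=
  Finset.univ.filter (OKg L σ)

lemma mem_Gset {σ : ColPerm a n} {s : ℕ} {g : Fin n → Fin (s+1)} :
    g ∈ Gset L σ s ↔ OKg L σ g := by
  unfold Gset; simp

lemma gg_mem_Gset {s : ℕ} (f : Fin n → Alph L s) : OKg L (Phi L f) (gg L f) := by
  constructor
  · intro i h
    have hlt := key_strictMono_along L f
      (show (⟨i, by omega⟩ : Fin n) < ⟨i+1, h⟩ by simp [Fin.lt_def])
    simp only [Function.comp_apply, key_perm0] at hlt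
    rw [Prod.Lex.toLex_lt_toLex] at hlt
    by_cases hdes : (i+1) ∈ DesL L (Phi L f)
    · simp only [if_pos hdes]
      rcases hlt with h1 | ⟨h1, h2⟩
      · omega
      · exfalso
        rw [mem_DesL_succ L i h] at hdes
        omega
    · simp only [if_neg hdes]
      rcases hlt with h1 | ⟨h1, h2⟩ <;> omega
  · intro h0
    have hn : 0 < n := Finset.mem_range.1 (DesL_subset_range L h0)
    have hc : (Phi L f).2 ⟨0, hn⟩ ∈ L := (mem_DesL_zero L hn).1 h0
    have := (f (perm0 L f ⟨0, hn⟩)).2 hc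
    have : (gg L f ⟨0, hn⟩ : ℕ) ≠ 0 := fun hz => this (Fin.ext hz)
    omega

lemma OKg_level_pos {σ : ColPerm a n} {s : ℕ} {g : Fin n → Fin (s+1)} (hg : OKg L σ g)
    (i : Fin n) (hc : σ.2 i ∈ L) : (g i : ℕ) ≠ 0 := by
  obtain ⟨h1, h2⟩ := hg
  have main : ∀ (k : ℕ) (h : k < n), σ.2 ⟨k, h⟩ ∈ L → (g ⟨k, h⟩ : ℕ) ≠ 0 := by
    intro k
    induction k with
    | zero =>
      intro h hL
      have : 0 ∈ DesL L σ := (mem_DesL_zero L h).2 hL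
      have := h2 this
      omega
    | succ m ih =>
      intro h hL hz
      have hm : (g ⟨m, by omega⟩ : ℕ) = 0 := by have := h1 m h; omega
      have hmL : σ.2 ⟨m, by omega⟩ ∉ L := fun hin => ih (by omega) hin hm
      have hrpos : 0 < rr L σ ⟨m, by omega⟩ := by
        unfold rr X0
        rw [rk_letter L _ _ (by omega), if_neg hmL]
        exact rk_letter_abs_pos _ _ (by omega)
      have hrneg : rr L σ ⟨m+1, h⟩ < 0 := by
        unfold rr X0
        exact (rk_neg_iff L _ _ (by omega)).2 hL
      have hdes : (m+1) ∈ DesL L σ := (mem_DesL_succ L m h).2 (by omega)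
      have := h1 m h
      rw [if_pos hdes] at this
      omega
  simpa using main i i.isLt (by simpa using hc)

/-- The word associated with a pair `(σ, g)`. -/
def bwd (σ : ColPerm a n) {s : ℕ} (g : Fin n → Fin (s+1)) (hg : OKg L σ g) :
    Fin n → Alph L s :=
  fun v => ⟨(σ.2 (σ.1.symm v), g (σ.1.symm v)), fun hc =>
    fun hz => OKg_level_pos L hg (σ.1.symm v) hc (congrArg Fin.val hz)⟩

lemma key_bwd (σ : ColPerm a n) {s : ℕ} (g : Fin n → Fin (s+1)) (hg : OKg L σ g) (i : Fin n) :
    key L (bwd L σ g hg) (σ.1 i) = toLex ((g i : ℕ), rr L σ i) := by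
  unfold key bwd rr X0
  simp

lemma Phi_bwd (σ : ColPerm a n) {s : ℕ} (g : Fin n → Fin (s+1)) (hg : OKg L σ g) :
    Phi L (bwd L σ g hg) = σ := by
  set f := bwd L σ g hg with hf
  have hsm : StrictMono (key L f ∘ σ.1) := by
    have hn : ∀ (i : ℕ) (h : i + 1 < n),
        key L f (σ.1 ⟨i, by omega⟩) < key L f (σ.1 ⟨i+1, h⟩) := by
      intro i h
      rw [key_bwd L σ g hg, key_bwd L σ g hg, Prod.Lex.toLex_lt_toLex]
      have h1 := hg.1 i h
      by_cases hdes : (i+1) ∈ DesL L σ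
      · left; rw [if_pos hdes] at h1; omega
      · rw [if_neg hdes] at h1
        rcases Nat.lt_or_ge (g ⟨i, by omega⟩ : ℕ) (g ⟨i+1, h⟩ : ℕ) with h2 | h2
        · left; exact h2
        · right
          refine ⟨by omega, ?_⟩
          rw [mem_DesL_succ L i h] at hdes
          have : rr L σ ⟨i, by omega⟩ ≠ rr L σ ⟨i+1, h⟩ := by
            intro heq
            have := rr_inj L heq
            simp [Fin.ext_iff] at this
          omega
    -- strict mono from adjacent comparisons
    match n, σ, g, hg, f, hn with
    | 0, σ, g, hg, f, hn => exact fun i => i.elim0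
    | (m+1), σ, g, hg, f, hn =>
      rw [Fin.strictMono_iff_lt_succ]
      intro i
      have := hn i (by omega)
      exact this
  have hsort : σ.1 = Tuple.sort (key L f) := by
    rw [Tuple.eq_sort_iff]
    refine ⟨hsm.monotone, fun i j hij heq => ?_⟩
    exact absurd (σ.1.injective (key_inj L f heq)) (ne_of_lt hij)
  have hperm : perm0 L f = σ.1 := hsort.symm
  unfold Phi
  rw [hperm]
  refine Prod.ext rfl ?_
  funext i
  show (f (σ.1 i)).1.1 = σ.2 i
  unfold f
  unfold bwd
  simp

end AeulProof
namespace AeulProof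
variable {a : ℕ} [NeZero a] (L : Finset (Fin a)) {n : ℕ}

lemma gg_bwd (σ : ColPerm a n) {s : ℕ} (g : Fin n → Fin (s+1)) (hg : OKg L σ g) :
    gg L (bwd L σ g hg) = g := by
  funext i
  have hp : perm0 L (bwd L σ g hg) = σ.1 := congrArg Prod.fst (Phi_bwd L σ g hg)
  unfold gg
  rw [hp]
  unfold bwd
  simp

lemma bwd_gg {s : ℕ} (f : Fin n → Alph L s) (hg : OKg L (Phi L f) (gg L f)) :
    bwd L (Phi L f) (gg L f) hg = f := by
  funext v
  unfold bwd
  apply Subtype.ext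
  show ((Phi L f).2 ((Phi L f).1.symm v), gg L f ((Phi L f).1.symm v)) = (f v).1
  unfold Phi gg
  simp only
  show ((f (perm0 L f (_root_.id ((perm0 L f).symm v)))).1.1,
    (f (perm0 L f ((perm0 L f).symm v))).1.2) = (f v).1
  rw [Equiv.apply_symm_apply]
  simp

lemma card_funs (s : ℕ) :
    Fintype.card (Fin n → Alph L s) = ∑ σ : ColPerm a n, (Gset L σ s).card := by
  rw [← Finset.card_univ]
  rw [Finset.card_eq_sum_card_fiberwise
    (f := Phi L) (t := Finset.univ) (fun x _ => Finset.mem_univ _)]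
  refine Finset.sum_congr rfl (fun σ _ => ?_)
  refine Finset.card_bij' (i := fun f _ => gg L f)
    (j := fun g hg => bwd L σ g ((mem_Gset L).1 hg)) ?_ ?_ ?_ ?_
  · intro f hf
    rw [Finset.mem_filter] at hf
    obtain ⟨-, rfl⟩ := hf
    rw [mem_Gset]
    exact gg_mem_Gset L f
  · intro g hg
    rw [Finset.mem_filter]
    exact ⟨Finset.mem_univ _, Phi_bwd L σ g _⟩
  · intro f hf
    rw [Finset.mem_filter] at hf
    have h2 := hf.2
    subst h2
    exact bwd_gg L f _
  · intro g hg
    exact gg_bwd L σ g _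

end AeulProof
namespace AeulProof
variable {a : ℕ} [NeZero a] (L : Finset (Fin a)) {n : ℕ}

/-- Number of descents among `{0,…,k}`. -/
noncomputable def Dcnt (σ : ColPerm a n) (k : ℕ) : ℕ := ((DesL L σ).filter (· ≤ k)).card

lemma Dcnt_zero (σ : ColPerm a n) :
    Dcnt L σ 0 = if 0 ∈ DesL L σ then 1 else 0 := by
  unfold Dcnt
  have h : (DesL L σ).filter (· ≤ 0) = (DesL L σ).filter (· = 0) := by
    ext x
    simp only [Finset.mem_filter]
    constructor <;> rintro ⟨h1, h2⟩ <;> exact ⟨h1, by omega⟩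
  rw [h, Finset.filter_eq']
  split <;> simp

lemma Dcnt_succ (σ : ColPerm a n) (k : ℕ) :
    Dcnt L σ (k+1) = Dcnt L σ k + (if (k+1) ∈ DesL L σ then 1 else 0) := by
  unfold Dcnt
  have h : (DesL L σ).filter (· ≤ k+1)
      = ((DesL L σ).filter (· ≤ k)) ∪ ((DesL L σ).filter (· = k+1)) := by
    ext x
    simp only [Finset.mem_filter, Finset.mem_union]
    constructor
    · rintro ⟨h1, h2⟩
      rcases Nat.lt_or_ge x (k+1) with h3 | h3
      · exact Or.inl ⟨h1, by omega⟩
      · exact Or.inr ⟨h1, by omega⟩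
    · rintro (⟨h1, h2⟩ | ⟨h1, h2⟩) <;> exact ⟨h1, by omega⟩
  rw [h, Finset.card_union_of_disjoint, Finset.filter_eq']
  · split <;> simp
  · rw [Finset.disjoint_left]
    intro x hx hy
    simp only [Finset.mem_filter] at hx hy
    omega

lemma Dcnt_le (σ : ColPerm a n) (k : ℕ) : Dcnt L σ k ≤ desL L σ :=
  Finset.card_le_card (Finset.filter_subset _ _)

lemma Dcnt_last (σ : ColPerm a n) {m : ℕ} (h : n = m + 1) : Dcnt L σ m = desL L σ := by
  unfold Dcnt desL
  congr 1
  rw [Finset.filter_true_of_mem]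
  intro x hx
  have := Finset.mem_range.1 (DesL_subset_range L hx)
  omega

lemma OKg_ge {σ : ColPerm a n} {s : ℕ} {g : Fin n → Fin (s+1)} (hg : OKg L σ g) :
    ∀ (k : ℕ) (h : k < n), Dcnt L σ k ≤ (g ⟨k, h⟩ : ℕ) := by
  intro k
  induction k with
  | zero =>
    intro h
    rw [Dcnt_zero]
    by_cases h0 : 0 ∈ DesL L σ
    · rw [if_pos h0]
      exact hg.2 h0
    · rw [if_neg h0]
      omega
  | succ m ih =>
    intro h
    have h1 := hg.1 m h
    have h2 := ih (by omega)
    rw [Dcnt_succ]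
    split at h1 <;> simp_all <;> omega

/-- The number of monotone maps `Fin n → Fin m`. -/
noncomputable def Mon (n m : ℕ) : ℕ := Fintype.card {h : Fin n → Fin m // Monotone h}

lemma Mon_eq_card_filter (n m : ℕ) :
    Mon n m = (Finset.univ.filter (fun h : Fin n → Fin m => Monotone h)).card :=
  Fintype.card_subtype _

lemma Mon_zero (m : ℕ) : Mon 0 m = 1 := by
  unfold Mon
  have : Subsingleton {h : Fin 0 → Fin m // Monotone h} := by
    constructor
    rintro ⟨f, _⟩ ⟨g, _⟩
    apply Subtype.ext
    funext i
    exact i.elim0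
  rw [Fintype.card_eq_one_iff]
  exact ⟨⟨fun i => i.elim0, fun i => i.elim0⟩, fun y => Subsingleton.elim _ _⟩

lemma card_Gset (σ : ColPerm a n) (s : ℕ) :
    (Gset L σ s).card
      = if desL L σ ≤ s then Mon n (s - desL L σ + 1) else 0 := by
  rcases n with _ | m
  · -- n = 0 : the unique empty function, no descents
    have hd : desL L σ = 0 := by
      unfold desL
      have : DesL L σ = ∅ := by
        apply Finset.eq_empty_of_forall_notMem
        intro x hx
        simpa using DesL_subset_range L hx
      simp [this]
    rw [hd, if_pos (by omega), Mon_zero]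
    rw [show Gset L σ s = Finset.univ from ?_]
    · simp [Finset.card_univ]
    · apply Finset.eq_univ_of_forall
      intro g
      rw [mem_Gset]
      constructor
      · intro i h; omega
      · intro h0
        exfalso
        simpa using DesL_subset_range L h0
  · set d := desL L σ with hdd
    have hDlast : Dcnt L σ m = d := Dcnt_last L σ rfl
    by_cases hds : d ≤ s
    · rw [if_pos hds]
      rw [Mon_eq_card_filter]
      refine Finset.card_bij'
        (i := fun g hg => fun k => (⟨(g k : ℕ) - Dcnt L σ (k : ℕ), by
          have h1 : Dcnt L σ (k : ℕ) ≤ (g k : ℕ) := by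
            have := OKg_ge L ((mem_Gset L).1 hg) (k : ℕ) k.isLt
            simpa using this
          -- value at last position bounds: g k - Dcnt k ≤ s - d
          have hmono : ∀ (l : ℕ) (hl : l < m + 1), ∀ (kk : ℕ) (hkk : kk ≤ l),
              (g ⟨kk, by omega⟩ : ℕ) - Dcnt L σ kk ≤ (g ⟨l, hl⟩ : ℕ) - Dcnt L σ l := by
            intro l
            induction l with
            | zero => intro hl kk hkk; interval_cases kk; omega
            | succ p ihp =>
              intro hl kk hkk
              rcases Nat.lt_or_ge kk (p+1) with hc | hc
              · have step : (g ⟨p, by omega⟩ : ℕ) - Dcnt L σ p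
                    ≤ (g ⟨p+1, hl⟩ : ℕ) - Dcnt L σ (p+1) := by
                  have hOK := ((mem_Gset L).1 hg).1 p hl
                  have hd2 := Dcnt_succ L σ p
                  have hge := OKg_ge L ((mem_Gset L).1 hg) p (by omega)
                  split at hOK <;> simp_all <;> omega
                exact le_trans (ihp (by omega) kk (by omega)) step
              · have : kk = p+1 := by omega
                subst this
                omega
          have hlast := hmono m (by omega) (k : ℕ) (by omega)
          have hgle : (g ⟨m, by omega⟩ : ℕ) ≤ s := by
            have := (g ⟨m, by omega⟩).isLt; omega
          have : (g ⟨(k:ℕ), k.isLt⟩ : ℕ) - Dcnt L σ (k:ℕ) ≤ s - d := by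
            rw [← hDlast]
            refine le_trans ?_ (Nat.sub_le_sub_right hgle _)
            simpa using hlast
          simpa using Nat.lt_succ_of_le this⟩ : Fin (s - d + 1)))
        (j := fun h hh => fun k => (⟨(h k : ℕ) + Dcnt L σ (k : ℕ), by
          have h1 : (h k : ℕ) ≤ s - d := by have := (h k).isLt; omega
          have h2 : Dcnt L σ (k : ℕ) ≤ d := by
            rw [← hDlast]
            unfold Dcnt
            apply Finset.card_le_card
            intro x hx
            simp only [Finset.mem_filter] at hx ⊢
            have := Finset.mem_range.1 (DesL_subset_range L hx.1)
            exact ⟨hx.1, by omega⟩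
          omega⟩ : Fin (s+1)))
        ?_ ?_ ?_ ?_
      · -- forward lands in monotone
        intro g hg
        simp only [Finset.mem_filter, Finset.mem_univ, true_and]
        intro i j hij
        -- repeat of hmono; use same induction
        have hmono : ∀ (l : ℕ) (hl : l < m + 1), ∀ (kk : ℕ) (hkk : kk ≤ l),
            (g ⟨kk, by omega⟩ : ℕ) - Dcnt L σ kk ≤ (g ⟨l, hl⟩ : ℕ) - Dcnt L σ l := by
          intro l
          induction l with
          | zero => intro hl kk hkk; interval_cases kk; omega
          | succ p ihp =>
            intro hl kk hkk
            rcases Nat.lt_or_ge kk (p+1) with hc | hc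
            · have step : (g ⟨p, by omega⟩ : ℕ) - Dcnt L σ p
                  ≤ (g ⟨p+1, hl⟩ : ℕ) - Dcnt L σ (p+1) := by
                have hOK := ((mem_Gset L).1 hg).1 p hl
                have hd2 := Dcnt_succ L σ p
                have hge := OKg_ge L ((mem_Gset L).1 hg) p (by omega)
                split at hOK <;> simp_all <;> omega
              exact le_trans (ihp (by omega) kk (by omega)) step
            · have : kk = p+1 := by omega
              subst this
              omega
        show ((⟨_, _⟩ : Fin (s-d+1)) : Fin _) ≤ ⟨_, _⟩
        rw [Fin.le_def]
        have := hmono (j : ℕ) j.isLt (i : ℕ) (Fin.le_def.1 hij)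
        simpa using this
      · -- backward lands in Gset
        intro h hh
        rw [mem_Gset]
        simp only [Finset.mem_filter, Finset.mem_univ, true_and] at hh
        constructor
        · intro i hi
          have hmono := hh (show (⟨i, by omega⟩ : Fin (m+1)) ≤ ⟨i+1, hi⟩ by
            rw [Fin.le_def]; simp)
          rw [Fin.le_def] at hmono
          have hd2 := Dcnt_succ L σ i
          simp only [Fin.val_mk] at hmono ⊢
          split <;> simp_all <;> omega
        · intro h0
          have hD0 : Dcnt L σ 0 = 1 := by rw [Dcnt_zero, if_pos h0]
          simp only [Fin.val_mk]
          omega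
      · -- j ∘ i = id
        intro g hg
        funext k
        apply Fin.ext
        have := OKg_ge L ((mem_Gset L).1 hg) (k : ℕ) k.isLt
        simp only [Fin.val_mk]
        simp only [Fin.eta] at this
        omega
      · -- i ∘ j = id
        intro h hh
        funext k
        apply Fin.ext
        simp
    · rw [if_neg hds]
      rw [Finset.card_eq_zero]
      apply Finset.eq_empty_of_forall_notMem
      intro g hg
      have h1 := OKg_ge L ((mem_Gset L).1 hg) m (by omega)
      have h2 : (g ⟨m, by omega⟩ : ℕ) ≤ s := by have := (g ⟨m, by omega⟩).isLt; omega
      omega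

end AeulProof
namespace AeulProof
open PowerSeries

lemma Mon_succ_zero (n : ℕ) : Mon (n+1) 0 = 0 := by
  unfold Mon
  rw [Fintype.card_eq_zero_iff]
  exact ⟨fun ⟨h, _⟩ => (h 0).elim0⟩

lemma Mon_one (n : ℕ) : Mon n 1 = 1 := by
  unfold Mon
  rw [Fintype.card_eq_one_iff]
  refine ⟨⟨fun _ => 0, fun i j _ => le_refl _⟩, fun y => Subtype.ext (funext fun i => ?_)⟩
  have : ∀ x : Fin 1, x = 0 := fun x => by omega
  rw [this (y.1 i)]

lemma Mon_rec (n m : ℕ) : Mon (n+1) (m+1) = Mon (n+1) m + Mon n (m+1) := by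
  rw [Mon_eq_card_filter, Mon_eq_card_filter, Mon_eq_card_filter]
  rw [← Finset.card_filter_add_card_filter_not
    (s := Finset.univ.filter (fun g : Fin (n+1) → Fin (m+1) => Monotone g))
    (p := fun g => g (Fin.last n) = Fin.last m)]
  rw [Finset.filter_filter, Finset.filter_filter, add_comm]
  congr 1
  · -- g last ≠ last : corresponds to monotone maps into Fin m
    refine Finset.card_bij'
      (i := fun g hg => fun k => (⟨(g k : ℕ), by
        rw [Finset.mem_filter] at hg
        obtain ⟨-, hmono, hne⟩ := hg
        have h1 : g k ≤ g (Fin.last n) := hmono (Fin.le_last k)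
        have h2 : (g (Fin.last n) : ℕ) < m + 1 := (g (Fin.last n)).isLt
        have h3 : (g (Fin.last n) : ℕ) ≠ m := fun hm => hne (Fin.ext (by simpa using hm))
        rw [Fin.le_def] at h1
        omega⟩ : Fin m))
      (j := fun h _ => fun k => (⟨(h k : ℕ), by have := (h k).isLt; omega⟩ : Fin (m+1)))
      ?_ ?_ ?_ ?_
    · intro g hg
      rw [Finset.mem_filter] at hg ⊢
      refine ⟨Finset.mem_univ _, fun i j hij => ?_⟩
      rw [Fin.le_def]
      have := hg.2.1 hij
      rw [Fin.le_def] at this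
      simpa using this
    · intro h hh
      rw [Finset.mem_filter] at hh ⊢
      refine ⟨Finset.mem_univ _, fun i j hij => ?_, ?_⟩
      · rw [Fin.le_def]
        have := hh.2 hij
        rw [Fin.le_def] at this
        simpa using this
      · simp only [Fin.ext_iff, Fin.val_last]
        have h2 := (h (Fin.last n)).isLt
        omega
    · intro g hg
      funext k
      exact Fin.ext rfl
    · intro h hh
      funext k
      exact Fin.ext rfl
  · -- g last = last : corresponds to monotone maps from Fin n
    refine Finset.card_bij'
      (i := fun g _ => fun i : Fin n => g ⟨(i : ℕ), by omega⟩)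
      (j := fun h _ => fun k : Fin (n+1) =>
        if hk : (k : ℕ) < n then h ⟨(k : ℕ), hk⟩ else Fin.last m)
      ?_ ?_ ?_ ?_
    · intro g hg
      rw [Finset.mem_filter] at hg ⊢
      refine ⟨Finset.mem_univ _, fun i j hij => ?_⟩
      apply hg.2.1
      rw [Fin.le_def]
      rw [Fin.le_def] at hij
      simpa using hij
    · intro h hh
      rw [Finset.mem_filter] at hh ⊢
      refine ⟨Finset.mem_univ _, fun i j hij => ?_, ?_⟩
      · dsimp only
        by_cases hj : (j : ℕ) < n
        · have hi : (i : ℕ) < n := by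
            rw [Fin.le_def] at hij
            omega
          rw [dif_pos hi, dif_pos hj]
          apply hh.2
          rw [Fin.le_def]
          rw [Fin.le_def] at hij
          simpa using hij
        · rw [dif_neg hj]
          split
          · exact Fin.le_last _
          · exact le_refl _
      · dsimp only
        rw [dif_neg (by simp)]
    · intro g hg
      rw [Finset.mem_filter] at hg
      funext k
      dsimp only
      by_cases hk : (k : ℕ) < n
      · rw [dif_pos hk]
      · rw [dif_neg hk]
        have hkl : k = Fin.last n := Fin.ext (by have := k.isLt; simp; omega)
        rw [hkl, hg.2.2]
    · intro h hh
      funext i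
      dsimp only
      rw [dif_pos i.isLt]

/-- The generating function `Σ_s Mon n (s+1) X^s`. -/
noncomputable def MGF (n : ℕ) : PowerSeries ℚ := PowerSeries.mk fun s => (Mon n (s+1) : ℚ)

lemma MGF_step (n : ℕ) : (1 - PowerSeries.X) * MGF (n+1) = MGF n := by
  ext s
  rw [sub_mul, one_mul, map_sub]
  rcases s with _ | t
  · rw [coeff_zero_X_mul]
    unfold MGF
    simp only [coeff_mk, sub_zero]
    rw [show Mon (n+1) 1 = Mon n 1 from by rw [Mon_rec, Mon_succ_zero, zero_add]]
  · rw [coeff_succ_X_mul]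
    unfold MGF
    simp only [coeff_mk]
    rw [Mon_rec]
    push_cast
    ring

lemma MGF_inv (n : ℕ) : (1 - PowerSeries.X) ^ (n+1) * MGF n = 1 := by
  induction n with
  | zero =>
    rw [pow_one]
    have h0 : MGF 0 = PowerSeries.mk 1 := by
      ext s
      simp [MGF, Mon_zero]
    rw [h0, mul_comm, PowerSeries.mk_one_mul_one_sub_eq_one]
  | succ m ih =>
    calc (1 - PowerSeries.X) ^ (m+2) * MGF (m+1)
        = (1 - PowerSeries.X) ^ (m+1) * ((1 - PowerSeries.X) * MGF (m+1)) := by ring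
      _ = (1 - PowerSeries.X) ^ (m+1) * MGF m := by rw [MGF_step]
      _ = 1 := ih

end AeulProof
namespace AeulProof
open PowerSeries
variable {a : ℕ} [NeZero a] (L : Finset (Fin a)) {n : ℕ}

lemma Aeul_coe (a n : ℕ) [NeZero a] (L : Finset (Fin a)) :
    ((Aeul a n L : Polynomial ℚ) : PowerSeries ℚ)
      = ∑ σ : ColPerm a n, (PowerSeries.X : PowerSeries ℚ) ^ (desL L σ) := by
  unfold Aeul
  rw [show ((∑ σ : ColPerm a n, Polynomial.X ^ desL L σ : Polynomial ℚ) : PowerSeries ℚ)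
      = Polynomial.coeToPowerSeries.ringHom (∑ σ : ColPerm a n, Polynomial.X ^ desL L σ)
      from rfl]
  rw [map_sum]
  refine Finset.sum_congr rfl fun σ _ => ?_
  rw [map_pow]
  congr 1
  simp

lemma GsetGF (σ : ColPerm a n) :
    PowerSeries.mk (fun s => ((Gset L σ s).card : ℚ))
      = (PowerSeries.X : PowerSeries ℚ) ^ (desL L σ) * MGF n := by
  ext s
  rw [coeff_mk, mul_comm, PowerSeries.coeff_mul_X_pow']
  rw [card_Gset]
  split
  · unfold MGF
    rw [coeff_mk]
  · norm_num

lemma carlitz (a n : ℕ) [NeZero a] (L : Finset (Fin a)) :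
    ((Aeul a n L : Polynomial ℚ) : PowerSeries ℚ)
      = (1 - PowerSeries.X) ^ (n+1)
        * PowerSeries.mk (fun s => (((a * (s+1) - L.card : ℕ) : ℚ)) ^ n) := by
  have hmk : PowerSeries.mk (fun s => (((a * (s+1) - L.card : ℕ) : ℚ)) ^ n)
      = ∑ σ : ColPerm a n, PowerSeries.mk (fun s => ((Gset L σ s).card : ℚ)) := by
    ext s
    rw [coeff_mk, map_sum]
    have h2 : (a * (s+1) - L.card) ^ n = ∑ σ : ColPerm a n, (Gset L σ s).card := by
      rw [← card_funs L s]
      rw [Fintype.card_fun, card_Alph, Fintype.card_fin]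
    calc (((a * (s+1) - L.card : ℕ) : ℚ)) ^ n
        = (((a * (s+1) - L.card) ^ n : ℕ) : ℚ) := by push_cast; ring
      _ = ((∑ σ : ColPerm a n, (Gset L σ s).card : ℕ) : ℚ) := by rw [h2]
      _ = ∑ σ : ColPerm a n, ((Gset L σ s).card : ℚ) := by push_cast; ring
      _ = ∑ σ : ColPerm a n, (PowerSeries.coeff (R := ℚ) s) (PowerSeries.mk (fun s => ((Gset L σ s).card : ℚ))) := by
          refine Finset.sum_congr rfl fun σ _ => ?_
          rw [coeff_mk]
  rw [hmk, Finset.mul_sum, Aeul_coe]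
  refine Finset.sum_congr rfl fun σ _ => ?_
  rw [GsetGF]
  symm
  calc (1 - PowerSeries.X) ^ (n+1) * ((PowerSeries.X : PowerSeries ℚ) ^ (desL L σ) * MGF n)
      = (PowerSeries.X : PowerSeries ℚ) ^ (desL L σ)
        * ((1 - PowerSeries.X) ^ (n+1) * MGF n) := by ring
    _ = (PowerSeries.X : PowerSeries ℚ) ^ (desL L σ) := by rw [MGF_inv, mul_one]

end AeulProof
namespace AeulProof
open PowerSeries

lemma qbinom (c y : ℚ) (n : ℕ) :
    ∑ p ∈ Finset.HasAntidiagonal.antidiagonal n,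
      ((p.1.factorial : ℚ)⁻¹ * (p.2.factorial : ℚ)⁻¹ * y ^ p.2) * c ^ p.1
      = (n.factorial : ℚ)⁻¹ * (c + y) ^ n := by
  rw [add_pow, Finset.Nat.sum_antidiagonal_eq_sum_range_succ
    (f := fun i j => ((i.factorial : ℚ)⁻¹ * (j.factorial : ℚ)⁻¹ * y ^ j) * c ^ i)]
  rw [Finset.mul_sum]
  refine Finset.sum_congr rfl fun m hm => ?_
  have hmn : m ≤ n := by
    rw [Finset.mem_range] at hm; omega
  have hfact : ((n.choose m : ℚ)) * m.factorial * (n - m).factorial = n.factorial := by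
    exact_mod_cast congrArg (Nat.cast : ℕ → ℚ)
      (Nat.choose_mul_factorial_mul_factorial hmn)
  have h1 : (m.factorial : ℚ) ≠ 0 := Nat.cast_ne_zero.2 (Nat.factorial_ne_zero m)
  have h2 : ((n - m).factorial : ℚ) ≠ 0 := Nat.cast_ne_zero.2 (Nat.factorial_ne_zero _)
  have h3 : (n.factorial : ℚ) ≠ 0 := Nat.cast_ne_zero.2 (Nat.factorial_ne_zero n)
  field_simp
  linear_combination (-(c^m * y^(n-m))) * hfact

lemma shift_sub (f : ℕ → ℚ) :
    PowerSeries.mk f - PowerSeries.X * PowerSeries.mk (fun s => f (s+1))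
      = PowerSeries.C (R := ℚ) (f 0) := by
  ext s
  rw [map_sub]
  rcases s with _ | t
  · rw [coeff_zero_X_mul, PowerSeries.coeff_mk]
    simp [PowerSeries.coeff_C]
  · rw [coeff_succ_X_mul, PowerSeries.coeff_mk, PowerSeries.coeff_mk]
    simp [PowerSeries.coeff_C]

variable (a : ℕ) [NeZero a] (L : Finset (Fin a))

/-- `Σ_s ((a(s+1) - ℓ))^k X^s`. -/
noncomputable def Gs (k : ℕ) : PowerSeries ℚ :=
  PowerSeries.mk fun s => ((a : ℚ) * (s+1) - (L.card : ℚ)) ^ k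

lemma card_le_mul (s : ℕ) : L.card ≤ a * (s + 1) := by
  have h1 : L.card ≤ a := by
    simpa using Finset.card_le_card (Finset.subset_univ L)
  have h2 : a ≤ a * (s+1) := by nlinarith
  omega

lemma Gs_eq (k : ℕ) :
    PowerSeries.mk (fun s => (((a * (s+1) - L.card : ℕ) : ℚ)) ^ k) = Gs a L k := by
  unfold Gs
  ext s
  rw [PowerSeries.coeff_mk, PowerSeries.coeff_mk]
  congr 1
  rw [Nat.cast_sub (card_le_mul a L s)]
  push_cast
  ring

lemma S1 (y : ℚ) (n : ℕ) :
    ∑ p ∈ Finset.HasAntidiagonal.antidiagonal n,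
      (PowerSeries.C (R := ℚ) (p.1.factorial : ℚ)⁻¹ * PowerSeries.C (R := ℚ) (p.2.factorial : ℚ)⁻¹
        * (PowerSeries.C (R := ℚ) y) ^ p.2) * Gs a L p.1
      = PowerSeries.C (R := ℚ) (n.factorial : ℚ)⁻¹
        * PowerSeries.mk (fun s => ((a : ℚ) * (s+1) - (L.card : ℚ) + y) ^ n) := by
  ext s
  rw [PowerSeries.coeff_C_mul, PowerSeries.coeff_mk, map_sum]
  have : ∀ p ∈ Finset.HasAntidiagonal.antidiagonal n,
      (PowerSeries.coeff (R := ℚ) s)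
        ((PowerSeries.C (R := ℚ) (p.1.factorial : ℚ)⁻¹ * PowerSeries.C (R := ℚ) (p.2.factorial : ℚ)⁻¹
          * (PowerSeries.C (R := ℚ) y) ^ p.2) * Gs a L p.1)
      = ((p.1.factorial : ℚ)⁻¹ * (p.2.factorial : ℚ)⁻¹ * y ^ p.2)
          * ((a : ℚ) * (s+1) - (L.card : ℚ)) ^ p.1 := by
    intro p _
    rw [← map_pow, ← map_mul, ← map_mul, PowerSeries.coeff_C_mul]
    unfold Gs
    rw [PowerSeries.coeff_mk]
  rw [Finset.sum_congr rfl this]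
  exact qbinom _ y n

end AeulProof
namespace AeulProof
open PowerSeries

lemma shift_sub' (u v : ℕ → ℚ) (huv : ∀ s, v s = u (s+1)) :
    PowerSeries.mk u - PowerSeries.X * PowerSeries.mk v = PowerSeries.C (R := ℚ) (u 0) := by
  rw [show PowerSeries.mk v = PowerSeries.mk (fun s => u (s+1)) from by
    ext s; rw [PowerSeries.coeff_mk, PowerSeries.coeff_mk, huv]]
  exact shift_sub u

lemma collapse (u v : ℕ → ℚ) (h : ∀ s, v s = u (s+1)) (c : ℚ) (n : ℕ) :
    (1 - PowerSeries.X) ^ (n+1) * (PowerSeries.C (R := ℚ) c * PowerSeries.mk u)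
      - PowerSeries.X * ((1 - PowerSeries.X) ^ (n+1) * (PowerSeries.C (R := ℚ) c * PowerSeries.mk v))
    = (1 - PowerSeries.X) ^ (n+1) * PowerSeries.C (R := ℚ) (c * u 0) := by
  have h1 := shift_sub' u v h
  calc (1 - PowerSeries.X) ^ (n+1) * (PowerSeries.C (R := ℚ) c * PowerSeries.mk u)
      - PowerSeries.X * ((1 - PowerSeries.X) ^ (n+1) * (PowerSeries.C (R := ℚ) c * PowerSeries.mk v))
      = (1 - PowerSeries.X) ^ (n+1) * PowerSeries.C (R := ℚ) c
          * (PowerSeries.mk u - PowerSeries.X * PowerSeries.mk v) := by ring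
    _ = (1 - PowerSeries.X) ^ (n+1) * PowerSeries.C (R := ℚ) c * PowerSeries.C (R := ℚ) (u 0) := by rw [h1]
    _ = (1 - PowerSeries.X) ^ (n+1) * PowerSeries.C (R := ℚ) (c * u 0) := by
        rw [map_mul]; ring

variable (a : ℕ) [NeZero a] (L : Finset (Fin a))

lemma term_eq (i j n : ℕ) (hij : i + j = n) :
    ((i.factorial : ℚ)⁻¹ • ((Aeul a i L : Polynomial ℚ) : PowerSeries ℚ)) *
      (-(PowerSeries.X * (((L.card : PowerSeries ℚ) * (1 - PowerSeries.X)) ^ j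
          * algebraMap ℚ (PowerSeries ℚ) (1 / j.factorial)))
        + (((a : PowerSeries ℚ) - (L.card : PowerSeries ℚ)) * (PowerSeries.X - 1)) ^ j
          * algebraMap ℚ (PowerSeries ℚ) (1 / j.factorial))
      = (1 - PowerSeries.X) ^ (n+1)
          * ((PowerSeries.C (R := ℚ) (i.factorial : ℚ)⁻¹ * PowerSeries.C (R := ℚ) (j.factorial : ℚ)⁻¹
              * (PowerSeries.C (R := ℚ) ((L.card : ℚ) - (a : ℚ))) ^ j) * Gs a L i)
        - PowerSeries.X
          * ((1 - PowerSeries.X) ^ (n+1)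
            * ((PowerSeries.C (R := ℚ) (i.factorial : ℚ)⁻¹ * PowerSeries.C (R := ℚ) (j.factorial : ℚ)⁻¹
                * (PowerSeries.C (R := ℚ) (L.card : ℚ)) ^ j) * Gs a L i)) := by
  subst hij
  rw [PowerSeries.smul_eq_C_mul, carlitz, Gs_eq]
  have hL : (L.card : PowerSeries ℚ) = PowerSeries.C (R := ℚ) (L.card : ℚ) := by
    rw [map_natCast (PowerSeries.C (R := ℚ))]
  have ha : (a : PowerSeries ℚ) = PowerSeries.C (R := ℚ) (a : ℚ) := by
    rw [map_natCast (PowerSeries.C (R := ℚ))]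
  have hA : algebraMap ℚ (PowerSeries ℚ) (1 / (j.factorial : ℚ))
      = PowerSeries.C (R := ℚ) (j.factorial : ℚ)⁻¹ := by
    rw [PowerSeries.algebraMap_apply]
    simp [one_div]
  rw [hL, ha, hA]
  rw [show (PowerSeries.C (R := ℚ) (a : ℚ) - PowerSeries.C (R := ℚ) (L.card : ℚ)) * (PowerSeries.X - 1)
      = (PowerSeries.C (R := ℚ) ((L.card : ℚ) - (a : ℚ))) * (1 - PowerSeries.X) from by
    rw [map_sub]; ring]
  rw [mul_pow, mul_pow]
  rw [show i + j + 1 = (i+1) + j from by omega, pow_add]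
  rw [map_sub]
  ring

end AeulProof

open AeulProof in
theorem Aeul_egf_closed_form' (a : ℕ) [NeZero a] (L : Finset (Fin a)) :
    (PowerSeries.mk (fun n => (n.factorial : ℚ)⁻¹ • (Aeul a n L : PowerSeries ℚ)) :
      PowerSeries (PowerSeries ℚ)) =
      PowerSeries.C (R := PowerSeries ℚ) (1 - PowerSeries.X) *
        Ring.inverse
          (- PowerSeries.C (R := PowerSeries ℚ) PowerSeries.X *
              PowerSeries.rescale ((L.card : PowerSeries ℚ) * (1 - PowerSeries.X))
                (PowerSeries.exp (PowerSeries ℚ)) +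
            PowerSeries.rescale
                (((a : PowerSeries ℚ) - (L.card : PowerSeries ℚ)) * (PowerSeries.X - 1))
                (PowerSeries.exp (PowerSeries ℚ))) := by
  set R := PowerSeries ℚ
  set D : PowerSeries R :=
    - PowerSeries.C (R := R) PowerSeries.X *
        PowerSeries.rescale ((L.card : R) * (1 - PowerSeries.X)) (PowerSeries.exp R) +
      PowerSeries.rescale (((a : R) - (L.card : R)) * (PowerSeries.X - 1))
        (PowerSeries.exp R) with hDdef
  have hresc : ∀ c : R, PowerSeries.constantCoeff (R := R)
      (PowerSeries.rescale c (PowerSeries.exp R)) = 1 := by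
    intro c
    rw [← PowerSeries.coeff_zero_eq_constantCoeff_apply, PowerSeries.coeff_rescale]
    rw [PowerSeries.coeff_exp]
    simp
  have hDunit : IsUnit D := by
    rw [PowerSeries.isUnit_iff_constantCoeff]
    have h1 : PowerSeries.constantCoeff (R := R) D = 1 - PowerSeries.X := by
      rw [hDdef, map_add, neg_mul, map_neg, map_mul, PowerSeries.constantCoeff_C,
        hresc, hresc, mul_one]
      ring
    rw [h1, PowerSeries.isUnit_iff_constantCoeff]
    simp
  rw [Ring.eq_mul_inverse_iff_mul_eq _ _ _ hDunit]
  ext n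
  rw [PowerSeries.coeff_mul, PowerSeries.coeff_C]
  have hterm : ∀ p ∈ Finset.HasAntidiagonal.antidiagonal n,
      (PowerSeries.coeff (R := R) p.1)
          (PowerSeries.mk (fun m => (m.factorial : ℚ)⁻¹ • (Aeul a m L : R)))
        * (PowerSeries.coeff (R := R) p.2) D
      = (1 - PowerSeries.X) ^ (n+1)
          * ((PowerSeries.C (R := ℚ) (p.1.factorial : ℚ)⁻¹ * PowerSeries.C (R := ℚ) (p.2.factorial : ℚ)⁻¹
              * (PowerSeries.C (R := ℚ) ((L.card : ℚ) - (a : ℚ))) ^ p.2) * Gs a L p.1)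
        - PowerSeries.X
          * ((1 - PowerSeries.X) ^ (n+1)
            * ((PowerSeries.C (R := ℚ) (p.1.factorial : ℚ)⁻¹ * PowerSeries.C (R := ℚ) (p.2.factorial : ℚ)⁻¹
                * (PowerSeries.C (R := ℚ) (L.card : ℚ)) ^ p.2) * Gs a L p.1)) := by
    intro p hp
    have hij := Finset.HasAntidiagonal.mem_antidiagonal.1 hp
    rw [PowerSeries.coeff_mk, hDdef, map_add, neg_mul, map_neg, PowerSeries.coeff_C_mul,
      PowerSeries.coeff_rescale, PowerSeries.coeff_rescale, PowerSeries.coeff_exp]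
    exact term_eq a L p.1 p.2 n hij
  rw [Finset.sum_congr rfl hterm, Finset.sum_sub_distrib, ← Finset.mul_sum,
    ← Finset.mul_sum, ← Finset.mul_sum]
  rw [S1 a L ((L.card : ℚ) - (a : ℚ)) n, S1 a L (L.card : ℚ) n]
  rw [collapse _ _ (fun s => by push_cast; ring_nf) ((n.factorial : ℚ)⁻¹) n]
  by_cases hn : n = 0
  · subst hn
    rw [if_pos rfl]
    norm_num
  · rw [if_neg hn]
    have h0 : ((a : ℚ) * (((0:ℕ):ℚ) + 1) - (L.card : ℚ) + ((L.card : ℚ) - (a : ℚ))) ^ n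
        = 0 := by
      rw [show ((a : ℚ) * (((0:ℕ):ℚ) + 1) - (L.card : ℚ) + ((L.card : ℚ) - (a : ℚ)))
          = 0 from by push_cast; ring]
      exact zero_pow hn
    rw [h0, mul_zero, map_zero, mul_zero]

/-- Closed form for the EGF of the `C_a ≀ S_n` Eulerian polynomials:
`Σ_{n≥0} (uⁿ/n!) A_{a,ℓ,n}(t) = (1−t)/(−t e^{ℓ(1−t)u} + e^{(a−ℓ)u(t−1)})`,
as formal power series in `u` with coefficients formal power series in `t` over `ℚ`
(the denominator has constant term in `u` equal to the unit `1 − t`, and is inverted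
via `Ring.inverse`; `e^{cu}` is `rescale c exp`). -/
theorem Aeul_egf_closed_form (a : ℕ) [NeZero a] (L : Finset (Fin a)) :
    (PowerSeries.mk (fun n => (n.factorial : ℚ)⁻¹ • (Aeul a n L : PowerSeries ℚ)) :
      PowerSeries (PowerSeries ℚ)) =
      PowerSeries.C (R := PowerSeries ℚ) (1 - PowerSeries.X) *
        Ring.inverse
          (- PowerSeries.C (R := PowerSeries ℚ) PowerSeries.X *
              PowerSeries.rescale ((L.card : PowerSeries ℚ) * (1 - PowerSeries.X))
                (PowerSeries.exp (PowerSeries ℚ)) +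
            PowerSeries.rescale
                (((a : PowerSeries ℚ) - (L.card : PowerSeries ℚ)) * (PowerSeries.X - 1))
                (PowerSeries.exp (PowerSeries ℚ))) :=
  Aeul_egf_closed_form' a L
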